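/- (Uniform target sampling, single-distance counts.) Fix n ≥ 1, a bit string k : Fin n → Bool, and naturals d, t, x with 1 ≤ d ≤ n and x < t. Then the number of finite sets T of bit strings (Fin n → Bool) with |T| = t, k ∈ T, and |{z ∈ T | hammingDist z k = d}| = x equals (n.choose d).choose x * (2^n − 1 − n.choose d).choose (t − 1 − x). -/

import Mathlib

open Finset

private lemma sphere_card (n : ℕ) (k : Fin n → Bool) (d : ℕ) :
    (univ.filter (fun z : Fin n → Bool => hammingDist z k = d)).card = n.choose d := by
  have h : n.choose d = ((univ : Finset (Fin n)).powersetCard d).card := by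
    simp [Finset.card_powersetCard]
  rw [h]
  apply Finset.card_nbij' (fun z => univ.filter (fun i => z i ≠ k i))
    (fun s => fun i => if i ∈ s then !(k i) else k i)
  · intro z hz
    simp only [mem_coe, mem_filter, mem_univ, true_and] at hz
    simp only [mem_coe, mem_powersetCard]
    exact ⟨Finset.subset_univ _, hz⟩
  · intro s hs
    simp only [mem_coe, mem_powersetCard] at hs
    simp only [mem_coe, mem_filter, mem_univ, true_and, hammingDist]
    rw [← hs.2]
    congr 1
    ext i
    by_cases h : i ∈ s <;> simp [h]
  · intro z hz
    funext i
    simp only [Finset.mem_filter, Finset.mem_univ, true_and]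
    cases hzi : z i <;> cases hki : k i <;> simp [hzi, hki]
  · intro s hs
    ext i
    by_cases h : i ∈ s <;> simp [h]

theorem uniform_sampling_single_count (n : ℕ) (hn : 1 ≤ n) (k : Fin n → Bool)
    (d t x : ℕ) (hd1 : 1 ≤ d) (hdn : d ≤ n) (hx : x < t) :
    (Finset.univ.filter (fun T : Finset (Fin n → Bool) =>
        T.card = t ∧ k ∈ T ∧
        (T.filter (fun z => hammingDist z k = d)).card = x)).card =
      (n.choose d).choose x * (2 ^ n - 1 - n.choose d).choose (t - 1 - x) := by
  classical
  set S : Finset (Fin n → Bool) := univ.filter (fun z => hammingDist z k = d) with hSdef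
  set R : Finset (Fin n → Bool) := univ.filter (fun z => z ≠ k ∧ hammingDist z k ≠ d) with hRdef
  have hS : S.card = n.choose d := sphere_card n k d
  have hkS : k ∉ S := by
    simp only [hSdef, mem_filter, mem_univ, true_and, hammingDist_self]
    omega
  have hR : R.card = 2 ^ n - 1 - n.choose d := by
    have hre : R = univ \ insert k S := by
      ext z
      simp only [hRdef, hSdef, mem_filter, mem_univ, true_and, mem_sdiff, mem_insert,
        not_or]
    have h2n : Fintype.card (Fin n → Bool) = 2 ^ n := by simp [Fintype.card_fun]
    rw [hre, card_sdiff_of_subset (subset_univ _), card_insert_of_notMem hkS, hS, card_univ, h2n]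
    omega
  rw [← hR, ← hS, ← Finset.card_powersetCard, ← Finset.card_powersetCard,
    ← Finset.card_product]
  apply Finset.card_nbij'
    (fun T => (T.filter (fun z => hammingDist z k = d),
               T.filter (fun z => z ≠ k ∧ hammingDist z k ≠ d)))
    (fun P => insert k (P.1 ∪ P.2))
  · intro T hT
    simp only [mem_coe, mem_filter, mem_univ, true_and] at hT
    obtain ⟨hcard, hkT, hxcard⟩ := hT
    simp only [mem_coe, mem_product, mem_powersetCard]
    have hkey : (T.filter (fun z => z = k ∨ hammingDist z k = d)).card = x + 1 := by
      have : T.filter (fun z => z = k ∨ hammingDist z k = d)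
          = insert k (T.filter (fun z => hammingDist z k = d)) := by
        ext z
        simp only [mem_filter, mem_insert]
        constructor
        · rintro ⟨hz, h | h⟩
          · exact Or.inl h
          · exact Or.inr ⟨hz, h⟩
        · rintro (h | ⟨hz, h⟩)
          · exact ⟨h ▸ hkT, Or.inl h⟩
          · exact ⟨hz, Or.inr h⟩
      rw [this, card_insert_of_notMem, hxcard]
      simp only [mem_filter, hammingDist_self]
      omega
    refine ⟨⟨?_, hxcard⟩, ?_, ?_⟩
    · intro z hz
      simp only [mem_filter] at hz
      simp only [hSdef, mem_filter, mem_univ, true_and]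
      exact hz.2
    · intro z hz
      simp only [mem_filter] at hz
      simp only [hRdef, mem_filter, mem_univ, true_and]
      exact hz.2
    · have hsplit : T.filter (fun z => z ≠ k ∧ hammingDist z k ≠ d)
          = T \ T.filter (fun z => z = k ∨ hammingDist z k = d) := by
        ext z
        simp only [mem_filter, mem_sdiff, not_or, not_and]
        tauto
      rw [hsplit, card_sdiff_of_subset (filter_subset _ _), hkey, hcard]
      omega
  · intro P hP
    simp only [mem_coe, mem_product, mem_powersetCard] at hP
    obtain ⟨⟨hA, hAc⟩, hB, hBc⟩ := hP
    have hAk : k ∉ P.1 := fun h => hkS (hA h)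
    have hBk : k ∉ P.2 := by
      intro h
      have := hB h
      simp only [hRdef, mem_filter] at this
      exact this.2.1 rfl
    have hAB : Disjoint P.1 P.2 := by
      rw [Finset.disjoint_left]
      intro z hz1 hz2
      have h1 := hA hz1
      have h2 := hB hz2
      simp only [hSdef, hRdef, mem_filter] at h1 h2
      exact h2.2.2 h1.2
    have hcard : (insert k (P.1 ∪ P.2)).card = t := by
      rw [card_insert_of_notMem (by simp [hAk, hBk]),
        card_union_of_disjoint hAB, hAc, hBc]
      omega
    have hfilt : (insert k (P.1 ∪ P.2)).filter (fun z => hammingDist z k = d) = P.1 := by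
      ext z
      simp only [mem_filter, mem_insert, mem_union]
      constructor
      · rintro ⟨h | h, hd'⟩
        · subst h; simp [hammingDist_self] at hd'; omega
        · rcases h with h | h
          · exact h
          · have := hB h
            simp only [hRdef, mem_filter] at this
            exact absurd hd' this.2.2
      · intro h
        have := hA h
        simp only [hSdef, mem_filter] at this
        exact ⟨Or.inr (Or.inl h), this.2⟩
    simp only [mem_coe, mem_filter, mem_univ, true_and]
    exact ⟨hcard, mem_insert_self _ _, by rw [hfilt, hAc]⟩
  · intro T hT
    simp only [mem_coe, mem_filter, mem_univ, true_and] at hT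
    obtain ⟨hcard, hkT, hxcard⟩ := hT
    ext z
    simp only [mem_insert, mem_union, mem_filter]
    constructor
    · rintro (h | ⟨hz, _⟩ | ⟨hz, _⟩)
      · exact h ▸ hkT
      · exact hz
      · exact hz
    · intro hz
      by_cases h1 : z = k
      · exact Or.inl h1
      by_cases h2 : hammingDist z k = d
      · exact Or.inr (Or.inl ⟨hz, h2⟩)
      · exact Or.inr (Or.inr ⟨hz, h1, h2⟩)
  · intro P hP
    simp only [mem_coe, mem_product, mem_powersetCard] at hP
    obtain ⟨⟨hA, hAc⟩, hB, hBc⟩ := hP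
    have hAk : k ∉ P.1 := fun h => hkS (hA h)
    have h1 : (insert k (P.1 ∪ P.2)).filter (fun z => hammingDist z k = d) = P.1 := by
      ext z
      simp only [mem_filter, mem_insert, mem_union]
      constructor
      · rintro ⟨h | h, hd'⟩
        · subst h; simp [hammingDist_self] at hd'; omega
        · rcases h with h | h
          · exact h
          · have := hB h
            simp only [hRdef, mem_filter] at this
            exact absurd hd' this.2.2
      · intro h
        have := hA h
        simp only [hSdef, mem_filter] at this
        exact ⟨Or.inr (Or.inl h), this.2⟩
    have h2 : (insert k (P.1 ∪ P.2)).filter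
        (fun z => z ≠ k ∧ hammingDist z k ≠ d) = P.2 := by
      ext z
      simp only [mem_filter, mem_insert, mem_union]
      constructor
      · rintro ⟨h | h, hne, hd'⟩
        · exact absurd h hne
        · rcases h with h | h
          · have := hA h
            simp only [hSdef, mem_filter] at this
            exact absurd this.2 hd'
          · exact h
      · intro h
        have := hB h
        simp only [hRdef, mem_filter] at this
        exact ⟨Or.inr (Or.inr h), this.2⟩
    beta_reduce
    rw [h1, h2]
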